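/- Let f, g be supported in a dyadic cube Q₀ and define B_j(g,f) = Σ_{K∈𝒟} ⟨|g|⟩_{3K} Σ_{P⊂3K, ℓP=2^{-j}ℓK} ⟨f,h_P⟩². Then the portion of B_j coming from points outside Q₀ satisfies B_j|_{Q₀^∁}(g,f) ≲_d 2^{-jd} ⟨|g|⟩_{Q₀} ⟨|f|⟩_{Q₀}² |Q₀|. -/

import Mathlib

open MeasureTheory ENNReal Set

structure DyadicCube (d : ℕ) where
  j : ℤ
  m : Fin d → ℤ

namespace DyadicCube

variable {d : ℕ}

/-- side length `2^{-j}` of the dyadic cube. -/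
noncomputable def side (Q : DyadicCube d) : ℝ := 2 ^ (-Q.j)

/-- the dyadic cube `2^{-j}([0,1)^d + m)` as a subset of `ℝ^d`. -/
def toSet (Q : DyadicCube d) : Set (Fin d → ℝ) :=
  {x | ∀ i, (Q.m i : ℝ) * 2 ^ (-Q.j) ≤ x i ∧ x i < ((Q.m i : ℝ) + 1) * 2 ^ (-Q.j)}

/-- the concentric triple `3Q`. -/
def triple (Q : DyadicCube d) : Set (Fin d → ℝ) :=
  {x | ∀ i, ((Q.m i : ℝ) - 1) * 2 ^ (-Q.j) ≤ x i ∧ x i < ((Q.m i : ℝ) + 2) * 2 ^ (-Q.j)}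

/-- the centre of the cube. -/
noncomputable def center (Q : DyadicCube d) : Fin d → ℝ :=
  fun i => ((Q.m i : ℝ) + 1 / 2) * 2 ^ (-Q.j)

/-- the `k`-fold dyadic ancestor `Q^{(k)}`. -/
def ancestor (k : ℕ) (Q : DyadicCube d) : DyadicCube d :=
  ⟨Q.j - k, fun i => Int.fdiv (Q.m i) (2 ^ k)⟩

/-- the `k`-grandchildren `ch_k(Q)`. -/
def children (k : ℕ) (Q : DyadicCube d) : Set (DyadicCube d) :=
  {P | P.j = Q.j + k ∧ P.toSet ⊆ Q.toSet}

/-- distance between two sets in the `ℓ^∞` metric of `ℝ^d`. -/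
noncomputable def sdist (A B : Set (Fin d → ℝ)) : ℝ :=
  (⨅ a ∈ A, EMetric.infEdist a B).toReal

/-- average `⟨f⟩_A` of `f` over `A`. -/
noncomputable def avg (f : (Fin d → ℝ) → ℝ) (A : Set (Fin d → ℝ)) : ℝ :=
  (volume A).toReal⁻¹ * ∫ x in A, f x

/-- average `⟨|f|⟩_A`. -/
noncomputable def avgAbs (f : (Fin d → ℝ) → ℝ) (A : Set (Fin d → ℝ)) : ℝ :=
  avg (fun x => |f x|) A

/-- `Q` is `r`-good with parameter `γ`. -/
def IsGood (r : ℕ) (γ : ℝ) (Q : DyadicCube d) : Prop :=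
  ∀ P : DyadicCube d, 2 ^ r * Q.side ≤ P.side →
    Q.side ^ γ * P.side ^ (1 - γ) < sdist Q.toSet (frontier P.toSet)

/-- martingale (Haar) difference `Δ_Q f`. -/
noncomputable def mdiff (f : (Fin d → ℝ) → ℝ) (Q : DyadicCube d) (x : Fin d → ℝ) : ℝ :=
  ∑' J : {J : DyadicCube d // J ∈ children 1 Q},
    Set.indicator J.1.toSet (fun _ => avg f J.1.toSet - avg f Q.toSet) x

/-- `Σ_ε ⟨f, h_Q^ε⟩² = ‖Δ_Q f‖_{L²}²`, the total squared Haar coefficient on `Q`. -/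
noncomputable def haarSq (f : (Fin d → ℝ) → ℝ) (P : DyadicCube d) : ℝ :=
  ∫ x in P.toSet, (mdiff f P x) ^ 2
instance : Countable (DyadicCube d) :=
  Countable.of_equiv (ℤ × (Fin d → ℤ))
    ⟨fun p => ⟨p.1, p.2⟩, fun Q => (Q.j, Q.m), fun _ => rfl, fun _ => rfl⟩

lemma toSet_eq_pi (Q : DyadicCube d) :
    Q.toSet = Set.pi univ (fun i => Ico ((Q.m i : ℝ) * 2 ^ (-Q.j)) (((Q.m i : ℝ) + 1) * 2 ^ (-Q.j))) := by
  ext x; simp [toSet, Set.pi, Ico]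

lemma triple_eq_pi (Q : DyadicCube d) :
    Q.triple = Set.pi univ (fun i => Ico (((Q.m i : ℝ) - 1) * 2 ^ (-Q.j)) (((Q.m i : ℝ) + 2) * 2 ^ (-Q.j))) := by
  ext x; simp [triple, Set.pi, Ico]

lemma measurableSet_toSet (Q : DyadicCube d) : MeasurableSet Q.toSet := by
  rw [toSet_eq_pi]
  exact MeasurableSet.pi (Set.to_countable _) (fun i _ => measurableSet_Ico)

lemma volume_toSet (Q : DyadicCube d) :
    volume Q.toSet = ENNReal.ofReal (((2:ℝ) ^ (-Q.j)) ^ d) := by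
  rw [toSet_eq_pi, volume_pi_pi]
  have : ∀ i : Fin d, volume (Ico ((Q.m i : ℝ) * 2 ^ (-Q.j)) (((Q.m i : ℝ) + 1) * 2 ^ (-Q.j)))
      = ENNReal.ofReal ((2:ℝ) ^ (-Q.j)) := by
    intro i; rw [Real.volume_Ico]; ring_nf
  simp only [this, Finset.prod_const, Finset.card_univ, Fintype.card_fin]
  rw [← ENNReal.ofReal_pow (by positivity)]

lemma toReal_volume_toSet (Q : DyadicCube d) :
    (volume Q.toSet).toReal = ((2:ℝ) ^ (-Q.j)) ^ d := by
  rw [volume_toSet, ENNReal.toReal_ofReal (by positivity)]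

lemma volume_triple (Q : DyadicCube d) :
    volume Q.triple = ENNReal.ofReal ((3 * (2:ℝ) ^ (-Q.j)) ^ d) := by
  rw [triple_eq_pi, volume_pi_pi]
  have : ∀ i : Fin d, volume (Ico (((Q.m i : ℝ) - 1) * 2 ^ (-Q.j)) (((Q.m i : ℝ) + 2) * 2 ^ (-Q.j)))
      = ENNReal.ofReal (3 * (2:ℝ) ^ (-Q.j)) := by
    intro i; rw [Real.volume_Ico]; ring_nf
  simp only [this, Finset.prod_const, Finset.card_univ, Fintype.card_fin]
  rw [← ENNReal.ofReal_pow (by positivity)]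

lemma toReal_volume_triple (Q : DyadicCube d) :
    (volume Q.triple).toReal = (3 * (2:ℝ) ^ (-Q.j)) ^ d := by
  rw [volume_triple, ENNReal.toReal_ofReal (by positivity)]

/-- if `Q` is coarser than `P` and they meet, then `P ⊆ Q`. -/
lemma subset_of_le_of_inter {P Q : DyadicCube d} (h : Q.j ≤ P.j)
    (hne : (P.toSet ∩ Q.toSet).Nonempty) : P.toSet ⊆ Q.toSet := by
  obtain ⟨y, hyP, hyQ⟩ := hne
  intro x hx i
  set a : ℝ := (2:ℝ) ^ (-P.j) with ha
  set b : ℝ := (2:ℝ) ^ (-Q.j) with hb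
  have apos : (0:ℝ) < a := by positivity
  obtain ⟨t, ht⟩ : ∃ t : ℕ, P.j - Q.j = (t : ℤ) := ⟨(P.j - Q.j).toNat, by omega⟩
  have hba : b = ((2 ^ t : ℤ) : ℝ) * a := by
    have hc : ((2 ^ t : ℤ) : ℝ) = (2:ℝ) ^ (t : ℤ) := by push_cast; exact (zpow_natCast 2 t).symm
    rw [ha, hb, hc, ← zpow_add₀ (two_ne_zero)]
    congr 1
    omega
  obtain ⟨hP1, hP2⟩ := hyP i
  obtain ⟨hQ1, hQ2⟩ := hyQ i
  have key1 : Q.m i * 2 ^ t ≤ P.m i := by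
    have hr : ((Q.m i * 2 ^ t : ℤ) : ℝ) * a < ((P.m i : ℤ) + 1 : ℝ) * a := by
      push_cast
      calc ((Q.m i : ℝ) * 2 ^ t) * a = (Q.m i : ℝ) * b := by rw [hba]; push_cast; ring
        _ ≤ y i := hQ1
        _ < ((P.m i : ℝ) + 1) * a := hP2
    have := (mul_lt_mul_iff_of_pos_right apos).mp hr
    exact_mod_cast Int.lt_add_one_iff.mp (by exact_mod_cast this)
  have key2 : P.m i + 1 ≤ (Q.m i + 1) * 2 ^ t := by
    have hr : ((P.m i : ℤ) : ℝ) * a < (((Q.m i + 1) * 2 ^ t : ℤ) : ℝ) * a := by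
      push_cast
      calc (P.m i : ℝ) * a ≤ y i := hP1
        _ < ((Q.m i : ℝ) + 1) * b := hQ2
        _ = (((Q.m i : ℝ) + 1) * 2 ^ t) * a := by rw [hba]; push_cast; ring
    have := (mul_lt_mul_iff_of_pos_right apos).mp hr
    exact_mod_cast Int.lt_iff_add_one_le.mp (by exact_mod_cast this)
  obtain ⟨hx1, hx2⟩ := hx i
  constructor
  · calc (Q.m i : ℝ) * b = ((Q.m i * 2 ^ t : ℤ) : ℝ) * a := by rw [hba]; push_cast; ring
      _ ≤ (P.m i : ℝ) * a := by
          apply mul_le_mul_of_nonneg_right _ apos.le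
          exact_mod_cast key1
      _ ≤ x i := hx1
  · calc x i < ((P.m i : ℝ) + 1) * a := hx2
      _ ≤ (((Q.m i + 1) * 2 ^ t : ℤ) : ℝ) * a := by
          apply mul_le_mul_of_nonneg_right _ apos.le
          exact_mod_cast key2
      _ = ((Q.m i : ℝ) + 1) * b := by rw [hba]; push_cast; ring

/-- two cubes of the same scale through a common point coincide. -/
lemma eq_of_same_scale_mem {P Q : DyadicCube d} (hj : P.j = Q.j) {x : Fin d → ℝ}
    (h1 : x ∈ P.toSet) (h2 : x ∈ Q.toSet) : P = Q := by
  obtain ⟨pj, pm⟩ := P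
  obtain ⟨qj, qm⟩ := Q
  simp only at hj
  subst hj
  simp only [mk.injEq, true_and]
  funext i
  obtain ⟨hP1, hP2⟩ := h1 i
  obtain ⟨hQ1, hQ2⟩ := h2 i
  have apos : (0:ℝ) < (2:ℝ) ^ (-pj) := by positivity
  have l1 : (pm i : ℝ) < (qm i : ℝ) + 1 := by
    have := hP1.trans_lt hQ2
    exact (mul_lt_mul_iff_of_pos_right apos).mp this
  have l2 : (qm i : ℝ) < (pm i : ℝ) + 1 := by
    have := hQ1.trans_lt hP2
    exact (mul_lt_mul_iff_of_pos_right apos).mp this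
  have : pm i < qm i + 1 := by exact_mod_cast l1
  have : qm i < pm i + 1 := by exact_mod_cast l2
  omega

lemma avgAbs_nonneg (f : (Fin d → ℝ) → ℝ) (A : Set (Fin d → ℝ)) : 0 ≤ avgAbs f A :=
  mul_nonneg (inv_nonneg.mpr ENNReal.toReal_nonneg)
    (integral_nonneg fun _ => abs_nonneg _)

lemma avgAbs_le {f : (Fin d → ℝ) → ℝ} (hf : Integrable f) (A : Set (Fin d → ℝ)) :
    avgAbs f A ≤ (volume A).toReal⁻¹ * ∫ x, |f x| := by
  unfold avgAbs avg
  apply mul_le_mul_of_nonneg_left _ (inv_nonneg.mpr ENNReal.toReal_nonneg)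
  exact setIntegral_le_integral hf.abs (Filter.Eventually.of_forall fun x => abs_nonneg _)

lemma abs_avg_le {f : (Fin d → ℝ) → ℝ} (hf : Integrable f) (A : Set (Fin d → ℝ)) :
    |avg f A| ≤ (volume A).toReal⁻¹ * ∫ x, |f x| := by
  unfold avg
  rw [abs_mul, abs_of_nonneg (inv_nonneg.mpr (ENNReal.toReal_nonneg : (0:ℝ) ≤ _))]
  apply mul_le_mul_of_nonneg_left _ (inv_nonneg.mpr ENNReal.toReal_nonneg)
  calc |∫ x in A, f x| = ‖∫ x in A, f x‖ := (Real.norm_eq_abs _).symm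
    _ ≤ ∫ x in A, ‖f x‖ := norm_integral_le_integral_norm _
    _ = ∫ x in A, |f x| := by simp [Real.norm_eq_abs]
    _ ≤ ∫ x, |f x| := setIntegral_le_integral hf.abs
        (Filter.Eventually.of_forall fun x => abs_nonneg _)

lemma haarSq_nonneg (f : (Fin d → ℝ) → ℝ) (P : DyadicCube d) : 0 ≤ haarSq f P :=
  integral_nonneg fun _ => sq_nonneg _

lemma abs_mdiff_le {f : (Fin d → ℝ) → ℝ} (hf : Integrable f) (P : DyadicCube d)
    (x : Fin d → ℝ) :
    |mdiff f P x| ≤ 2 * (∫ y, |f y|) * ((2:ℝ) ^ (P.j + 1)) ^ d := by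
  have Inn : 0 ≤ ∫ y, |f y| := integral_nonneg fun _ => abs_nonneg _
  have Mnn : (0:ℝ) ≤ 2 * (∫ y, |f y|) * ((2:ℝ) ^ (P.j + 1)) ^ d := by positivity
  by_cases hex : ∃ J : {J : DyadicCube d // J ∈ children 1 P}, x ∈ J.1.toSet
  · obtain ⟨J₀, hJ₀⟩ := hex
    have hval : mdiff f P x = avg f J₀.1.toSet - avg f P.toSet := by
      unfold mdiff
      rw [tsum_eq_single J₀ ?_]
      · exact Set.indicator_of_mem hJ₀ _
      · intro J' hne
        apply Set.indicator_of_notMem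
        intro hx'
        exact hne (Subtype.ext (eq_of_same_scale_mem (J'.2.1.trans J₀.2.1.symm) hx' hJ₀))
    have hJ₀j : J₀.1.j = P.j + 1 := by
      have := J₀.2.1; simpa using this
    have hvolJ : (volume J₀.1.toSet).toReal⁻¹ = ((2:ℝ) ^ (P.j + 1)) ^ d := by
      rw [toReal_volume_toSet, hJ₀j, ← inv_pow, ← zpow_neg]
      ring_nf
    have hvolP : (volume P.toSet).toReal⁻¹ = ((2:ℝ) ^ (P.j : ℤ)) ^ d := by
      rw [toReal_volume_toSet, ← inv_pow, ← zpow_neg]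
      ring_nf
    have hmono : ((2:ℝ) ^ (P.j : ℤ)) ^ d ≤ ((2:ℝ) ^ (P.j + 1)) ^ d := by
      have h2 : (2:ℝ) ^ (P.j : ℤ) ≤ (2:ℝ) ^ (P.j + 1) :=
        zpow_le_zpow_right₀ one_le_two (by omega)
      exact pow_le_pow_left₀ (by positivity) h2 d
    have h1 : |avg f J₀.1.toSet| ≤ ((2:ℝ) ^ (P.j + 1)) ^ d * ∫ y, |f y| := by
      have := abs_avg_le hf J₀.1.toSet
      rwa [hvolJ] at this
    have h2 : |avg f P.toSet| ≤ ((2:ℝ) ^ (P.j + 1)) ^ d * ∫ y, |f y| := by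
      have h := abs_avg_le hf P.toSet
      rw [hvolP] at h
      exact h.trans (mul_le_mul_of_nonneg_right hmono Inn)
    rw [hval]
    calc |avg f J₀.1.toSet - avg f P.toSet| ≤ |avg f J₀.1.toSet| + |avg f P.toSet| :=
          abs_sub _ _
      _ ≤ 2 * (∫ y, |f y|) * ((2:ℝ) ^ (P.j + 1)) ^ d := by nlinarith [h1, h2]
  · have : mdiff f P x = 0 := by
      unfold mdiff
      convert tsum_zero with J
      exact Set.indicator_of_notMem (fun h => hex ⟨J, h⟩) _
    simpa [this] using Mnn

lemma haarSq_le {f : (Fin d → ℝ) → ℝ} (hf : Integrable f) (P : DyadicCube d) :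
    haarSq f P ≤ (2 * (∫ y, |f y|) * ((2:ℝ) ^ (P.j + 1)) ^ d) ^ 2 * ((2:ℝ) ^ (-P.j)) ^ d := by
  set M : ℝ := 2 * (∫ y, |f y|) * ((2:ℝ) ^ (P.j + 1)) ^ d with hM
  have Mnn : 0 ≤ M := by
    have Inn : 0 ≤ ∫ y, |f y| := integral_nonneg fun _ => abs_nonneg _
    positivity
  have hM2 : ∀ x, (mdiff f P x) ^ 2 ≤ M ^ 2 := by
    intro x
    rw [← sq_abs]
    exact pow_le_pow_left₀ (abs_nonneg _) (abs_mdiff_le hf P x) 2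
  unfold haarSq
  by_cases hint : IntegrableOn (fun x => (mdiff f P x) ^ 2) P.toSet volume
  · calc ∫ x in P.toSet, (mdiff f P x) ^ 2 ≤ ∫ _x in P.toSet, M ^ 2 :=
        integral_mono hint ((integrableOn_const_iff (C := M ^ 2)).mpr (Or.inr (by
          rw [volume_toSet]; exact ENNReal.ofReal_lt_top))) (fun x => hM2 x)
      _ = (volume P.toSet).toReal * M ^ 2 := by rw [setIntegral_const]; simp [smul_eq_mul, measureReal_def]
      _ = M ^ 2 * ((2:ℝ) ^ (-P.j)) ^ d := by rw [toReal_volume_toSet]; ring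
  · rw [integral_undef hint]
    positivity

lemma haarSq_eq_zero_of_disjoint {f : (Fin d → ℝ) → ℝ} {Q₀ P : DyadicCube d}
    (hsupp : Function.support f ⊆ Q₀.toSet) (hdisj : P.toSet ∩ Q₀.toSet = ∅) :
    haarSq f P = 0 := by
  have hfz : ∀ x ∈ P.toSet, f x = 0 := by
    intro x hx
    by_contra h
    exact (Set.eq_empty_iff_forall_notMem.mp hdisj x) ⟨hx, hsupp h⟩
  have havg : ∀ A : Set (Fin d → ℝ), A ⊆ P.toSet → avg f A = 0 := by
    intro A hA
    unfold avg
    rw [setIntegral_eq_zero_of_forall_eq_zero (fun x hx => hfz x (hA hx)), mul_zero]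
  have hmd : ∀ x, mdiff f P x = 0 := by
    intro x
    unfold mdiff
    convert tsum_zero with J
    rw [havg J.1.toSet J.2.2, havg P.toSet subset_rfl]
    simp
  unfold haarSq
  apply setIntegral_eq_zero_of_forall_eq_zero
  intro x _
  rw [hmd x]
  ring

end DyadicCube
open DyadicCube

variable {d : ℕ}

/-- the pointwise integrand of the dyadic form `B_j(g,f)`:
`Σ_K ⟨|g|⟩_{3K} Σ_{P ⊂ 3K, ℓP = 2^{-j}ℓK} ⟨f,h_P⟩²/|P| 1_P(x)`. -/
noncomputable def BjIntegrand (j : ℕ) (g f : (Fin d → ℝ) → ℝ) (x : Fin d → ℝ) : ℝ≥0∞ :=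
  ∑' K : DyadicCube d,
    ∑' P : {P : DyadicCube d // P.j = K.j + j ∧ P.toSet ⊆ K.triple},
      ENNReal.ofReal (avgAbs g K.triple *
        Set.indicator P.1.toSet (fun _ => haarSq f P.1 / (volume P.1.toSet).toReal) x)

set_option maxHeartbeats 1000000 in

lemma lintegral_Bj (j : ℕ) (g f : (Fin d → ℝ) → ℝ) (Q₀ : DyadicCube d) :
    (∫⁻ x in Q₀.toSetᶜ, BjIntegrand j g f x) =
    ∑' K : DyadicCube d,
      ∑' P : {P : DyadicCube d // P.j = K.j + j ∧ P.toSet ⊆ K.triple},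
        ENNReal.ofReal (avgAbs g K.triple * (haarSq f P.1 / (volume P.1.toSet).toReal)) *
          volume (P.1.toSet ∩ Q₀.toSetᶜ) := by
  have hrew : ∀ (K P : DyadicCube d) (x : Fin d → ℝ),
      ENNReal.ofReal (avgAbs g K.triple *
          Set.indicator P.toSet (fun _ => haarSq f P / (volume P.toSet).toReal) x)
        = Set.indicator P.toSet
            (fun _ => ENNReal.ofReal (avgAbs g K.triple * (haarSq f P / (volume P.toSet).toReal))) x := by
    intro K P x
    by_cases h : x ∈ P.toSet
    · rw [Set.indicator_of_mem h, Set.indicator_of_mem h]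
    · rw [Set.indicator_of_notMem h, Set.indicator_of_notMem h, mul_zero, ENNReal.ofReal_zero]
  unfold BjIntegrand
  simp only [hrew]
  set G : (K : DyadicCube d) → {P : DyadicCube d // P.j = K.j + ↑j ∧ P.toSet ⊆ K.triple} → (Fin d → ℝ) → ℝ≥0∞ :=
    fun K P x => Set.indicator P.1.toSet
      (fun _ => ENNReal.ofReal (avgAbs g K.triple * (haarSq f P.1 / (volume P.1.toSet).toReal))) x with hGdef
  have hmeas : ∀ (K : DyadicCube d) P, Measurable (G K P) :=
    fun K P => measurable_const.indicator (measurableSet_toSet P.1)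
  have h1 : (∫⁻ x in Q₀.toSetᶜ, ∑' K, ∑' P, G K P x) = ∑' K, ∫⁻ x in Q₀.toSetᶜ, ∑' P, G K P x :=
    lintegral_tsum (fun K => (Measurable.ennreal_tsum (fun P => hmeas K P)).aemeasurable)
  rw [h1]
  refine tsum_congr fun K => ?_
  rw [lintegral_tsum (fun P => (hmeas K P).aemeasurable)]
  refine tsum_congr fun P => ?_
  rw [hGdef]
  rw [lintegral_indicator (measurableSet_toSet P.1), setLIntegral_const,
    Measure.restrict_apply (measurableSet_toSet P.1)]

def cubeEquiv (d : ℕ) : ℤ × (Fin d → ℤ) ≃ DyadicCube d :=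
  ⟨fun p => ⟨p.1, p.2⟩, fun K => (K.j, K.m), fun _ => rfl, fun _ => rfl⟩

def levelEquiv (N : ℤ) : ℕ ≃ {n : ℤ // n ∈ {n : ℤ | n ≤ N}} where
  toFun k := ⟨N - k, by simp⟩
  invFun q := (N - q.1).toNat
  left_inv k := by show (N - (N - (k:ℤ))).toNat = k; omega
  right_inv q := by
    obtain ⟨n, hn⟩ := q
    simp only [Set.mem_setOf_eq] at hn
    ext
    simp only
    omega

set_option maxHeartbeats 2000000 in
theorem Bj_outside_Q0 (d : ℕ) :
    ∃ C > 0, ∀ (j : ℕ) (f g : (Fin d → ℝ) → ℝ) (Q₀ : DyadicCube d),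
      Integrable f → Integrable g →
      Function.support f ⊆ Q₀.toSet → Function.support g ⊆ Q₀.toSet →
      (∫⁻ x in Q₀.toSetᶜ, BjIntegrand j g f x) ≤
        ENNReal.ofReal (C * (2 : ℝ) ^ (-(j * d : ℤ)) *
          avgAbs g Q₀.toSet * avgAbs f Q₀.toSet ^ 2) * volume Q₀.toSet := by
  classical
  refine ⟨8 * 4 ^ d, by positivity, ?_⟩
  intro j f g Q₀ hf hg hsf hsg
  rcases Nat.eq_zero_or_pos d with hd0 | hd
  · -- degenerate case `d = 0`: the cube is all of `ℝ^0`.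
    subst hd0
    have huniv : Q₀.toSet = Set.univ := by
      ext x
      simp only [toSet, Set.mem_setOf_eq, Set.mem_univ, iff_true]
      exact fun i => i.elim0
    rw [huniv, Set.compl_univ, Measure.restrict_empty, lintegral_zero_measure]
    exact zero_le
  -- main case `1 ≤ d`
  set I := ∫ y, |f y| with hI
  set Gg := ∫ y, |g y| with hGg
  have hInn : 0 ≤ I := integral_nonneg fun _ => abs_nonneg _
  have hGnn : 0 ≤ Gg := integral_nonneg fun _ => abs_nonneg _
  rw [lintegral_Bj]
  set cond : DyadicCube d → Prop :=
    fun K => K.j + (j:ℤ) < Q₀.j ∧ (Q₀.toSet ∩ K.triple).Nonempty with hcondd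
  set EV : ℤ → ℝ := fun n =>
    (((3 * (2:ℝ) ^ (-n)) ^ d)⁻¹ * Gg * (2 * I * ((2:ℝ) ^ (n + j + 1)) ^ d) ^ 2) *
      ((2:ℝ) ^ (-(n + j))) ^ d with hEV
  have hEVnn : ∀ n : ℤ, 0 ≤ (((3 * (2:ℝ) ^ (-n)) ^ d)⁻¹ * Gg * (2 * I * ((2:ℝ) ^ (n + j + 1)) ^ d) ^ 2) :=
    fun n => mul_nonneg (mul_nonneg (inv_nonneg.mpr (by positivity)) hGnn) (sq_nonneg _)
  set EK : DyadicCube d → ℝ≥0∞ := fun K => if cond K then ENNReal.ofReal (EV K.j) else 0 with hEK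
  have hperK : ∀ K : DyadicCube d,
      (∑' P : {P : DyadicCube d // P.j = K.j + ↑j ∧ P.toSet ⊆ K.triple},
        ENNReal.ofReal (avgAbs g K.triple * (haarSq f P.1 / (volume P.1.toSet).toReal)) *
          volume (P.1.toSet ∩ Q₀.toSetᶜ)) ≤ EK K := by
    intro K
    set T : {P : DyadicCube d // P.j = K.j + ↑j ∧ P.toSet ⊆ K.triple} → ℝ≥0∞ := fun P =>
      ENNReal.ofReal (avgAbs g K.triple * (haarSq f P.1 / (volume P.1.toSet).toReal)) *
        volume (P.1.toSet ∩ Q₀.toSetᶜ) with hT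
    have hkey : ∀ P, T P ≠ 0 →
        (Q₀.toSet ∩ P.1.toSet).Nonempty ∧ Q₀.toSet ⊆ P.1.toSet ∧ P.1.j < Q₀.j := by
      intro P hP
      have hne : (Q₀.toSet ∩ P.1.toSet).Nonempty := by
        by_contra h
        rw [Set.not_nonempty_iff_eq_empty] at h
        apply hP
        rw [hT]
        simp only
        rw [haarSq_eq_zero_of_disjoint hsf (by rwa [Set.inter_comm] at h)]
        simp
      have hlt : P.1.j < Q₀.j := by
        by_contra h
        push_neg at h
        have hsub : P.1.toSet ⊆ Q₀.toSet :=
          subset_of_le_of_inter h (by rwa [Set.inter_comm] at hne)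
        apply hP
        rw [hT]
        simp only
        have hzz : P.1.toSet ∩ Q₀.toSetᶜ = ∅ := by
          rw [← Set.diff_eq]; exact Set.diff_eq_empty.mpr hsub
        rw [hzz]
        simp
      exact ⟨hne, subset_of_le_of_inter (le_of_lt hlt) hne, hlt⟩
    by_cases hex : ∃ P, T P ≠ 0
    · obtain ⟨P₀, hP₀⟩ := hex
      obtain ⟨hne₀, hsub₀, hlt₀⟩ := hkey P₀ hP₀
      have hcond : cond K := by
        refine ⟨by have := P₀.2.1; omega, ?_⟩
        obtain ⟨y, hyQ, hyP⟩ := hne₀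
        exact ⟨y, hyQ, P₀.2.2 hyP⟩
      have hsum : (∑' P, T P) = T P₀ := by
        refine tsum_eq_single P₀ ?_
        intro P hPne
        by_contra hTP
        obtain ⟨hne, hsub, hlt⟩ := hkey P hTP
        obtain ⟨y, hyQ, _⟩ := hne
        exact hPne (Subtype.ext
          (eq_of_same_scale_mem (P.2.1.trans P₀.2.1.symm) (hsub hyQ) (hsub₀ hyQ)))
      rw [hsum, hEK]
      simp only [if_pos hcond]
      -- bound the single term
      have haK : avgAbs g K.triple ≤ ((3 * (2:ℝ) ^ (-K.j)) ^ d)⁻¹ * Gg := by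
        have := avgAbs_le hg K.triple
        rwa [toReal_volume_triple] at this
      have hcP : haarSq f P₀.1 / (volume P₀.1.toSet).toReal
          ≤ (2 * I * ((2:ℝ) ^ (K.j + j + 1)) ^ d) ^ 2 := by
        rw [div_le_iff₀ (by rw [toReal_volume_toSet]; positivity)]
        calc haarSq f P₀.1
            ≤ (2 * I * ((2:ℝ) ^ (P₀.1.j + 1)) ^ d) ^ 2 * ((2:ℝ) ^ (-P₀.1.j)) ^ d :=
              haarSq_le hf P₀.1
          _ = (2 * I * ((2:ℝ) ^ (K.j + ↑j + 1)) ^ d) ^ 2 * (volume P₀.1.toSet).toReal := by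
              rw [toReal_volume_toSet, P₀.2.1]
      have hreal : avgAbs g K.triple * (haarSq f P₀.1 / (volume P₀.1.toSet).toReal)
          ≤ ((3 * (2:ℝ) ^ (-K.j)) ^ d)⁻¹ * Gg * (2 * I * ((2:ℝ) ^ (K.j + ↑j + 1)) ^ d) ^ 2 := by
        exact mul_le_mul haK hcP
          (div_nonneg (haarSq_nonneg f P₀.1) ENNReal.toReal_nonneg)
          (mul_nonneg (inv_nonneg.mpr (by positivity)) hGnn)
      have hvol : volume (P₀.1.toSet ∩ Q₀.toSetᶜ)
          ≤ ENNReal.ofReal (((2:ℝ) ^ (-(K.j + ↑j))) ^ d) := by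
        refine le_trans (measure_mono Set.inter_subset_left) (le_of_eq ?_)
        rw [volume_toSet, P₀.2.1]
      calc T P₀ ≤ ENNReal.ofReal
            (((3 * (2:ℝ) ^ (-K.j)) ^ d)⁻¹ * Gg * (2 * I * ((2:ℝ) ^ (K.j + ↑j + 1)) ^ d) ^ 2) *
            ENNReal.ofReal (((2:ℝ) ^ (-(K.j + ↑j))) ^ d) :=
          mul_le_mul' (ENNReal.ofReal_le_ofReal hreal) hvol
        _ = ENNReal.ofReal (EV K.j) := by
            rw [← ENNReal.ofReal_mul (hEVnn K.j)]
    · push_neg at hex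
      have : (∑' P, T P) = 0 := by
        rw [ENNReal.tsum_eq_zero]
        exact fun P => not_not.mp (fun h => h (hex P))
      rw [this]
      exact zero_le
  refine le_trans (ENNReal.tsum_le_tsum hperK) ?_
  -- basic quantities
  set V : ℝ := ((2:ℝ) ^ (-Q₀.j)) ^ d with hV
  have hVpos : 0 < V := by positivity
  set ag : ℝ := avgAbs g Q₀.toSet with hag
  set af : ℝ := avgAbs f Q₀.toSet with haf
  have hagnn : 0 ≤ ag := avgAbs_nonneg _ _
  have hafnn : 0 ≤ af := avgAbs_nonneg _ _
  have hGeq : Gg = V * ag := by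
    have h1 : ag = V⁻¹ * Gg := by
      rw [hag]
      unfold avgAbs avg
      rw [toReal_volume_toSet, ← hV]
      congr 1
      refine setIntegral_eq_integral_of_forall_compl_eq_zero fun x hx => ?_
      simp only [abs_eq_zero]
      by_contra h
      exact hx (hsg h)
    rw [h1]
    field_simp
  have hIeq : I = V * af := by
    have h1 : af = V⁻¹ * I := by
      rw [haf]
      unfold avgAbs avg
      rw [toReal_volume_toSet, ← hV]
      congr 1
      refine setIntegral_eq_integral_of_forall_compl_eq_zero fun x hx => ?_
      simp only [abs_eq_zero]
      by_contra h
      exact hx (hsf h)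
    rw [h1]
    field_simp
  -- power juggling helpers
  have hpow : ∀ (c : ℤ) (k : ℕ), ((2:ℝ) ^ c) ^ k = (2:ℝ) ^ (c * k) := by
    intro c k
    rw [← zpow_natCast ((2:ℝ) ^ c) k, ← zpow_mul]
  have hz : ∀ a b : ℤ, (2:ℝ) ^ a * (2:ℝ) ^ b = (2:ℝ) ^ (a + b) := fun a b =>
    (zpow_add₀ two_ne_zero a b).symm
  set N : ℤ := Q₀.j - j - 1 with hN
  have hEVeq : ∀ n : ℤ, EV n = 4 * Gg * I ^ 2 * ((3:ℝ)⁻¹ * (2:ℝ) ^ (2*n + j + 2)) ^ d := by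
    intro n
    rw [hEV]
    simp only
    have h1 : ((3 * (2:ℝ) ^ (-n)) ^ d)⁻¹ = ((3:ℝ)⁻¹ * (2:ℝ) ^ (n:ℤ)) ^ d := by
      rw [← inv_pow, mul_inv, ← zpow_neg, neg_neg]
    rw [h1, mul_pow (3:ℝ)⁻¹ ((2:ℝ) ^ (n:ℤ)) d,
      mul_pow (3:ℝ)⁻¹ ((2:ℝ) ^ (2*n + (j:ℤ) + 2)) d, hpow, hpow, hpow, hpow]
    have e2 : (2:ℝ) ^ ((n:ℤ) * (d:ℤ)) * ((2:ℝ) ^ (((n:ℤ) + ↑j + 1) * (d:ℤ))) ^ 2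
        * (2:ℝ) ^ (-((n:ℤ) + ↑j) * (d:ℤ)) = (2:ℝ) ^ ((2*(n:ℤ) + ↑j + 2) * (d:ℤ)) := by
      rw [pow_two, hz, hz, hz]
      congr 1
      ring
    linear_combination (4 * Gg * I ^ 2 * ((3:ℝ)⁻¹) ^ d) * e2
  -- reindex the sum over K by (level, position)
  have hre : (∑' K : DyadicCube d, EK K) = ∑' n : ℤ, ∑' m : Fin d → ℤ, EK ⟨n, m⟩ := by
    rw [← (cubeEquiv d).tsum_eq EK, ← ENNReal.tsum_prod]
    rfl
  rw [hre]
  -- per-level bound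
  have hlevel : ∀ n : ℤ, (∑' m : Fin d → ℤ, EK ⟨n, m⟩)
      ≤ (if n ≤ N then (4:ℝ≥0∞) ^ d * ENNReal.ofReal (EV n) else 0) := by
    intro n
    by_cases hn : n ≤ N
    · rw [if_pos hn]
      set c : Fin d → ℤ := fun i => ⌈(Q₀.m i : ℝ) * (2:ℝ) ^ (n - Q₀.j)⌉ with hc
      set S : Finset (Fin d → ℤ) := Fintype.piFinset (fun i => Finset.Icc (c i - 2) (c i + 1)) with hS
      have hsupp : ∀ m ∉ S, EK ⟨n, m⟩ = 0 := by
        intro m hm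
        rw [hEK]
        simp only
        rw [if_neg]
        intro hcond
        apply hm
        obtain ⟨hlt, y, hyQ, hyK⟩ := hcond
        rw [hS, Fintype.mem_piFinset]
        intro i
        rw [Finset.mem_Icc]
        -- coordinate estimates
        have spos : (0:ℝ) < (2:ℝ) ^ (-n) := by positivity
        have hles : (2:ℝ) ^ (-Q₀.j) ≤ (2:ℝ) ^ (-n) :=
          zpow_le_zpow_right₀ one_le_two (by simp only at hlt; omega)
        obtain ⟨hy1, hy2⟩ := hyQ i
        obtain ⟨hk1, hk2⟩ := hyK i
        have hts : (Q₀.m i : ℝ) * (2:ℝ) ^ (n - Q₀.j) * (2:ℝ) ^ (-n)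
            = (Q₀.m i : ℝ) * (2:ℝ) ^ (-Q₀.j) := by
          rw [mul_assoc, hz]
          congr 2
          ring
        have upper : m i ≤ c i + 1 := by
          have h1 : ((m i : ℝ) - 1) * (2:ℝ) ^ (-n)
              < ((Q₀.m i : ℝ) * (2:ℝ) ^ (n - Q₀.j) + 1) * (2:ℝ) ^ (-n) := by
            calc ((m i : ℝ) - 1) * (2:ℝ) ^ (-n) ≤ y i := hk1
              _ < ((Q₀.m i : ℝ) + 1) * (2:ℝ) ^ (-Q₀.j) := hy2
              _ = (Q₀.m i : ℝ) * (2:ℝ) ^ (-Q₀.j) + (2:ℝ) ^ (-Q₀.j) := by ring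
              _ ≤ (Q₀.m i : ℝ) * (2:ℝ) ^ (n - Q₀.j) * (2:ℝ) ^ (-n) + (2:ℝ) ^ (-n) := by
                  rw [hts]; linarith
              _ = ((Q₀.m i : ℝ) * (2:ℝ) ^ (n - Q₀.j) + 1) * (2:ℝ) ^ (-n) := by ring
          have h2 : (m i : ℝ) - 1 < (Q₀.m i : ℝ) * (2:ℝ) ^ (n - Q₀.j) + 1 :=
            (mul_lt_mul_iff_of_pos_right spos).mp h1
          have h3 : (m i : ℝ) < ((c i : ℝ)) + 2 := by
            have hle := Int.le_ceil ((Q₀.m i : ℝ) * (2:ℝ) ^ (n - Q₀.j))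
            have hcc : (c i : ℝ) = (⌈(Q₀.m i : ℝ) * (2:ℝ) ^ (n - Q₀.j)⌉ : ℝ) := by rw [hc]
            rw [← hcc] at hle
            linarith
          have : (m i : ℤ) < c i + 2 := by exact_mod_cast h3
          omega
        have lower : c i - 2 ≤ m i := by
          have h1 : (Q₀.m i : ℝ) * (2:ℝ) ^ (n - Q₀.j) * (2:ℝ) ^ (-n)
              < ((m i : ℝ) + 2) * (2:ℝ) ^ (-n) := by
            rw [hts]
            exact hy1.trans_lt hk2
          have h2 : (Q₀.m i : ℝ) * (2:ℝ) ^ (n - Q₀.j) < (m i : ℝ) + 2 :=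
            (mul_lt_mul_iff_of_pos_right spos).mp h1
          have h3 : c i ≤ m i + 2 := by
            rw [hc]
            simp only
            refine Int.ceil_le.mpr ?_
            push_cast
            linarith
          omega
        exact ⟨lower, upper⟩
      rw [tsum_eq_sum hsupp]
      have hcard : (S.card : ℝ≥0∞) ≤ (4:ℝ≥0∞) ^ d := by
        have hcc : S.card = 4 ^ d := by
          rw [hS, Fintype.card_piFinset]
          have h4 : ∀ i : Fin d, (Finset.Icc (c i - 2) (c i + 1)).card = 4 := by
            intro i
            rw [Int.card_Icc]
            omega
          simp only [h4, Finset.prod_const, Finset.card_univ, Fintype.card_fin]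
        rw [hcc]
        norm_cast
      calc (∑ m ∈ S, EK ⟨n, m⟩) ≤ ∑ _m ∈ S, ENNReal.ofReal (EV n) := by
            refine Finset.sum_le_sum fun m _ => ?_
            rw [hEK]
            simp only
            split_ifs
            · exact le_rfl
            · exact zero_le
        _ = (S.card : ℝ≥0∞) * ENNReal.ofReal (EV n) := by
            rw [Finset.sum_const, nsmul_eq_mul]
        _ ≤ (4:ℝ≥0∞) ^ d * ENNReal.ofReal (EV n) := mul_le_mul_left hcard _
    · rw [if_neg hn]
      have hzero : ∀ m : Fin d → ℤ, EK ⟨n, m⟩ = 0 := by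
        intro m
        rw [hEK]
        refine if_neg fun hcond => hn ?_
        have := hcond.1
        simp only at this
        omega
      rw [ENNReal.tsum_eq_zero.mpr hzero]
  refine le_trans (ENNReal.tsum_le_tsum hlevel) ?_
  -- geometric series over the levels
  set r : ℝ≥0∞ := ENNReal.ofReal ((4:ℝ)⁻¹ ^ d) with hr
  set A : ℝ≥0∞ := (4:ℝ≥0∞) ^ d *
    ENNReal.ofReal (4 * Gg * I ^ 2 * ((3:ℝ)⁻¹ * (2:ℝ) ^ (2*N + j + 2)) ^ d) with hA
  have hgeom : (∑' n : ℤ, (if n ≤ N then (4:ℝ≥0∞) ^ d * ENNReal.ofReal (EV n) else 0))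
      ≤ A * 2 := by
    have heq1 : ∀ n : ℤ, (if n ≤ N then (4:ℝ≥0∞) ^ d * ENNReal.ofReal (EV n) else 0)
        = Set.indicator {n : ℤ | n ≤ N} (fun n => (4:ℝ≥0∞) ^ d * ENNReal.ofReal (EV n)) n := by
      intro n
      rw [Set.indicator_apply]
      rfl
    simp only [heq1]
    rw [← tsum_subtype]
    rw [← (levelEquiv N).tsum_eq]
    have hterm : ∀ k : ℕ,
        (4:ℝ≥0∞) ^ d * ENNReal.ofReal (EV (((levelEquiv N) k).1)) ≤ A * r ^ k := by
      intro k
      have hval : (((levelEquiv N) k).1 : ℤ) = N - k := rfl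
      rw [hval, hEVeq]
      have hsplit : ((3:ℝ)⁻¹ * (2:ℝ) ^ (2*(N - k) + j + 2)) ^ d
          = ((3:ℝ)⁻¹ * (2:ℝ) ^ (2*N + j + 2)) ^ d * ((4:ℝ)⁻¹ ^ d) ^ k := by
        have h4 : ((4:ℝ)⁻¹) ^ k = (2:ℝ) ^ (-2 * (k:ℤ)) := by
          rw [show (4:ℝ)⁻¹ = (2:ℝ) ^ (-2 : ℤ) by norm_num]
          rw [← zpow_natCast ((2:ℝ) ^ (-2:ℤ)) k, ← zpow_mul]
        have hsp : (2:ℝ) ^ (2*(N - (k:ℤ)) + j + 2)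
            = (2:ℝ) ^ (2*N + j + 2) * ((4:ℝ)⁻¹) ^ k := by
          rw [h4, hz]
          congr 1
          ring
        rw [hsp, ← mul_assoc, mul_pow (((3:ℝ)⁻¹ * (2:ℝ) ^ (2*N + ↑j + 2))) (((4:ℝ)⁻¹) ^ k) d]
        congr 1
        rw [← pow_mul, ← pow_mul, Nat.mul_comm]
      rw [hsplit]
      rw [show 4 * Gg * I ^ 2 * (((3:ℝ)⁻¹ * (2:ℝ) ^ (2*N + ↑j + 2)) ^ d * ((4:ℝ)⁻¹ ^ d) ^ k)
          = (4 * Gg * I ^ 2 * ((3:ℝ)⁻¹ * (2:ℝ) ^ (2*N + ↑j + 2)) ^ d) * ((4:ℝ)⁻¹ ^ d) ^ k by ring]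
      rw [ENNReal.ofReal_mul (by positivity)]
      rw [ENNReal.ofReal_pow (by positivity)]
      rw [hA, hr]
      calc (4:ℝ≥0∞) ^ d * (ENNReal.ofReal (4 * Gg * I ^ 2 * ((3:ℝ)⁻¹ * (2:ℝ) ^ (2*N + ↑j + 2)) ^ d)
            * ENNReal.ofReal ((4:ℝ)⁻¹ ^ d) ^ k)
          = (4:ℝ≥0∞) ^ d * ENNReal.ofReal (4 * Gg * I ^ 2 * ((3:ℝ)⁻¹ * (2:ℝ) ^ (2*N + ↑j + 2)) ^ d)
            * ENNReal.ofReal ((4:ℝ)⁻¹ ^ d) ^ k := by ring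
        _ ≤ _ := le_rfl
    calc (∑' k : ℕ, (4:ℝ≥0∞) ^ d * ENNReal.ofReal (EV (((levelEquiv N) k).1)))
        ≤ ∑' k : ℕ, A * r ^ k := ENNReal.tsum_le_tsum hterm
      _ = A * ∑' k : ℕ, r ^ k := ENNReal.tsum_mul_left
      _ = A * (1 - r)⁻¹ := by rw [ENNReal.tsum_geometric]
      _ ≤ A * 2 := by
          refine mul_le_mul_right ?_ A
          have hr2 : r ≤ 2⁻¹ := by
            rw [hr]
            calc ENNReal.ofReal ((4:ℝ)⁻¹ ^ d) ≤ ENNReal.ofReal ((4:ℝ)⁻¹ ^ 1) := by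
                  refine ENNReal.ofReal_le_ofReal ?_
                  refine pow_le_pow_of_le_one (by norm_num) (by norm_num) hd
              _ = ENNReal.ofReal ((4:ℝ)⁻¹) := by norm_num
              _ ≤ 2⁻¹ := by
                  rw [show ((2:ℝ≥0∞))⁻¹ = ENNReal.ofReal ((2:ℝ)⁻¹) by
                    rw [ENNReal.ofReal_inv_of_pos (by norm_num)]
                    norm_num]
                  exact ENNReal.ofReal_le_ofReal (by norm_num)
          have h12 : (2:ℝ≥0∞)⁻¹ ≤ 1 - r := by
            have h1 : r + 2⁻¹ ≤ 1 := by
              calc r + 2⁻¹ ≤ 2⁻¹ + 2⁻¹ := by gcongr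
                _ = 1 := by
                  rw [← two_mul]
                  exact ENNReal.mul_inv_cancel (by norm_num) (by norm_num)
            exact ENNReal.le_sub_of_add_le_left (hr2.trans_lt (by norm_num)).ne h1
          calc (1 - r)⁻¹ ≤ ((2:ℝ≥0∞)⁻¹)⁻¹ := ENNReal.inv_le_inv.mpr h12
            _ = 2 := inv_inv 2
  refine le_trans hgeom ?_
  -- final comparison
  have h4d : (4:ℝ≥0∞) ^ d = ENNReal.ofReal ((4:ℝ) ^ d) := by
    rw [ENNReal.ofReal_pow (by norm_num : (0:ℝ) ≤ 4)]
    congr 1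
    rw [show ((4:ℝ≥0∞)) = ((4:ℕ) : ℝ≥0∞) by norm_num, ← ENNReal.ofReal_natCast 4]
    norm_num
  have h2d : (2:ℝ≥0∞) = ENNReal.ofReal (2:ℝ) := by
    rw [show ((2:ℝ≥0∞)) = ((2:ℕ) : ℝ≥0∞) by norm_num, ← ENNReal.ofReal_natCast 2]
    norm_num
  rw [volume_toSet, ← hV, hA, h4d, h2d, ← ENNReal.ofReal_mul (by positivity),
    ← ENNReal.ofReal_mul (by positivity), ← ENNReal.ofReal_mul (by positivity)]
  refine ENNReal.ofReal_le_ofReal ?_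
  -- the closing real computation
  have hp : (0:ℝ) < (2:ℝ) ^ (2*N + (j:ℤ) + 2) := by positivity
  have hmon : ((3:ℝ)⁻¹ * (2:ℝ) ^ (2*N + (j:ℤ) + 2)) ^ d ≤ ((2:ℝ) ^ (2*N + (j:ℤ) + 2)) ^ d := by
    refine pow_le_pow_left₀ (by positivity) ?_ d
    nlinarith
  have key : V ^ 3 * ((2:ℝ) ^ (2*N + (j:ℤ) + 2)) ^ d = (2:ℝ) ^ (-((j:ℤ) * (d:ℤ))) * V := by
    rw [hV, hpow]
    rw [show (((2:ℝ) ^ ((-Q₀.j) * (d:ℤ))) ^ 3) = ((2:ℝ) ^ ((-Q₀.j) * (d:ℤ))) ^ (3:ℕ) from rfl]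
    rw [hpow, hpow, hz, hz]
    congr 1
    rw [hN]
    push_cast
    ring
  calc (4:ℝ) ^ d * (4 * Gg * I ^ 2 * ((3:ℝ)⁻¹ * (2:ℝ) ^ (2*N + ↑j + 2)) ^ d) * 2
      ≤ (4:ℝ) ^ d * (4 * Gg * I ^ 2 * ((2:ℝ) ^ (2*N + ↑j + 2)) ^ d) * 2 := by
        refine mul_le_mul_of_nonneg_right (mul_le_mul_of_nonneg_left ?_ (by positivity))
          (by norm_num)
        refine mul_le_mul_of_nonneg_left hmon ?_
        have := sq_nonneg I
        nlinarith
    _ = 8 * (4:ℝ) ^ d * ag * af ^ 2 * (V ^ 3 * ((2:ℝ) ^ (2*N + ↑j + 2)) ^ d) := by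
        rw [hGeq, hIeq]
        ring
    _ = 8 * (4:ℝ) ^ d * ag * af ^ 2 * ((2:ℝ) ^ (-((j:ℤ) * (d:ℤ))) * V) := by rw [key]
    _ ≤ 8 * 4 ^ d * (2:ℝ) ^ (-(j * d : ℤ)) * ag * af ^ 2 * V := le_of_eq (by push_cast; ring)
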